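/- arXiv:2011.08582 — 5 statements merged into one kernel-verified Lean document; each statement's English description precedes it below -/
import Mathlib

section
/- Let n and k be integers with n > k ≥ 2, and let a_1, a_2, ..., a_n and a be real numbers satisfying (∑_{i=1}^n a_i)^2 = (n - k + 1)(∑_{i=1}^n a_i^2 + a). Then 2∑_{1 ≤ i < j ≤ k} a_i a_j ≥ a. -/
open Finset

lemma chen_aux_sq (a : ℕ → ℝ) : ∀ k : ℕ,
    (∑ i ∈ Finset.range k, a i) ^ 2 =
      ∑ i ∈ Finset.range k, (a i) ^ 2 +
        2 * ∑ i ∈ Finset.range k, ∑ j ∈ Finset.Ioo i k, a i * a j := by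
  intro k
  induction k with
  | zero => simp
  | succ k ih =>
    have hstep : ∀ i ∈ Finset.range k,
        (∑ j ∈ Finset.Ioo i (k+1), a i * a j)
          = (∑ j ∈ Finset.Ioo i k, a i * a j) + a i * a k := by
      intro i hi
      rw [Finset.mem_range] at hi
      rw [show Finset.Ioo i (k+1) = insert k (Finset.Ioo i k) by
        ext x; simp [Finset.mem_Ioo, Finset.mem_insert]; omega]
      rw [Finset.sum_insert (by simp)]
      ring
    rw [Finset.sum_range_succ a, Finset.sum_range_succ (fun i => (a i)^2),
      Finset.sum_range_succ (fun i => ∑ j ∈ Finset.Ioo i (k+1), a i * a j)]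
    have he : Finset.Ioo k (k+1) = ∅ := by ext x; simp
    rw [he, Finset.sum_empty]
    rw [Finset.sum_congr rfl hstep, Finset.sum_add_distrib, ← Finset.sum_mul]
    nlinarith [ih]

/-- Chen's algebraic lemma: if `(∑ aᵢ)² = (n - k + 1)(∑ aᵢ² + a)` with `n > k ≥ 2`,
then `2 ∑_{1 ≤ i < j ≤ k} aᵢ aⱼ ≥ a`.  (Indices are 0-based: `a 0, …, a (n-1)`.) -/
theorem chen_lemma_inequality (n k : ℕ) (hk : 2 ≤ k) (hn : k < n)
    (a : ℕ → ℝ) (A : ℝ)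
    (h : (∑ i ∈ Finset.range n, a i) ^ 2 =
        ((n : ℝ) - (k : ℝ) + 1) * (∑ i ∈ Finset.range n, (a i) ^ 2 + A)) :
    2 * ∑ i ∈ Finset.range k, ∑ j ∈ Finset.Ioo i k, a i * a j ≥ A := by
  set s := ∑ i ∈ Finset.range k, a i with hs
  set p := ∑ i ∈ Finset.range k, (a i) ^ 2 with hp
  set t := ∑ i ∈ Finset.Ico k n, a i with ht
  set q := ∑ i ∈ Finset.Ico k n, (a i) ^ 2 with hq
  have hkn : k ≤ n := hn.le
  have hS : ∑ i ∈ Finset.range n, a i = s + t :=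
    (Finset.sum_range_add_sum_Ico a hkn).symm
  have hQ : ∑ i ∈ Finset.range n, (a i) ^ 2 = p + q :=
    (Finset.sum_range_add_sum_Ico (fun i => (a i)^2) hkn).symm
  -- Cauchy–Schwarz: (s + t)^2 ≤ (n - k + 1) * (s^2 + q)
  set g : ℕ → ℝ := fun j => if j < k then s else a j with hg
  have hcard : (Finset.Ico (k-1) n).card = n - k + 1 := by
    rw [Nat.card_Ico]; omega
  have hCS := sq_sum_le_card_mul_sum_sq (s := Finset.Ico (k-1) n) (f := g)
  have hsplit : Finset.Ico (k-1) n = insert (k-1) (Finset.Ico k n) := by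
    ext x; simp [Finset.mem_Ico, Finset.mem_insert]; omega
  have hnotmem : (k-1) ∉ Finset.Ico k n := by simp [Finset.mem_Ico]; omega
  have hg1 : ∑ j ∈ Finset.Ico (k-1) n, g j = s + t := by
    rw [hsplit, Finset.sum_insert hnotmem]
    congr 1
    · simp [hg]; omega
    · apply Finset.sum_congr rfl
      intro x hx
      rw [Finset.mem_Ico] at hx
      simp [hg, Nat.not_lt.mpr hx.1]
  have hg2 : ∑ j ∈ Finset.Ico (k-1) n, (g j) ^ 2 = s ^ 2 + q := by
    rw [hsplit, Finset.sum_insert hnotmem]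
    congr 1
    · simp [hg]; omega
    · apply Finset.sum_congr rfl
      intro x hx
      rw [Finset.mem_Ico] at hx
      simp [hg, Nat.not_lt.mpr hx.1]
  rw [hg1, hg2, hcard] at hCS
  have hm : ((n - k + 1 : ℕ) : ℝ) = (n : ℝ) - (k : ℝ) + 1 := by
    push_cast [Nat.cast_sub hkn]; ring
  rw [hm] at hCS
  have hmpos : (0:ℝ) < (n : ℝ) - (k : ℝ) + 1 := by
    have : (k:ℝ) < (n:ℝ) := by exact_mod_cast hn
    linarith
  rw [hS, hQ] at h
  -- from h and hCS: (n-k+1)(p+q+A) ≤ (n-k+1)(s^2+q)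
  have key : p + q + A ≤ s ^ 2 + q :=
    le_of_mul_le_mul_left (by linarith [h ▸ hCS]) hmpos
  have hid := chen_aux_sq a k
  rw [← hs, ← hp] at hid
  linarith
end

section
/- Let n and k be integers with n > k ≥ 2, and let a_1, a_2, ..., a_n and a be real numbers satisfying (∑_{i=1}^n a_i)^2 = (n - k + 1)(∑_{i=1}^n a_i^2 + a). Then equality 2∑_{1 ≤ i < j ≤ k} a_i a_j = a holds if and only if a_1 + a_2 + ... + a_k = a_{k+1} = a_{k+2} = ... = a_n. -/
lemma aux_sum_sub_sq (t : Finset ℕ) (f : ℕ → ℝ) :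
    ∑ i ∈ t, ∑ j ∈ t, (f i - f j)^2
      = 2 * ((t.card : ℝ) * ∑ i ∈ t, (f i)^2 - (∑ i ∈ t, f i)^2) := by
  have h1 : ∀ i ∈ t, ∑ j ∈ t, (f i - f j)^2
      = (t.card : ℝ) * (f i)^2 - 2 * f i * (∑ j ∈ t, f j) + ∑ j ∈ t, (f j)^2 := by
    intro i _
    have : ∀ j ∈ t, (f i - f j)^2 = (f i)^2 - 2 * f i * f j + (f j)^2 := by
      intro j _; ring
    rw [Finset.sum_congr rfl this, Finset.sum_add_distrib, Finset.sum_sub_distrib,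
      Finset.sum_const, ← Finset.mul_sum]
    ring
  rw [Finset.sum_congr rfl h1, Finset.sum_add_distrib, Finset.sum_sub_distrib,
    Finset.sum_const, ← Finset.mul_sum, ← Finset.sum_mul, ← Finset.mul_sum]
  ring

lemma aux_sq_sum_range (k : ℕ) (a : ℕ → ℝ) :
    (∑ i ∈ Finset.range k, a i)^2
      = ∑ i ∈ Finset.range k, (a i)^2
        + 2 * ∑ i ∈ Finset.range k, ∑ j ∈ Finset.Ioo i k, a i * a j := by
  induction k with
  | zero => simp
  | succ k ih =>
    have hI : ∀ i ∈ Finset.range k, ∑ j ∈ Finset.Ioo i (k+1), a i * a j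
        = ∑ j ∈ Finset.Ioo i k, a i * a j + a i * a k := by
      intro i hi
      rw [Finset.mem_range] at hi
      have he : Finset.Ioo i (k+1) = insert k (Finset.Ioo i k) := by
        ext j; simp only [Finset.mem_Ioo, Finset.mem_insert]; omega
      rw [he, Finset.sum_insert (by simp [Finset.mem_Ioo])]; ring
    have hlast : ∑ j ∈ Finset.Ioo k (k+1), a k * a j = 0 := by
      apply Finset.sum_eq_zero
      intro j hj; rw [Finset.mem_Ioo] at hj; omega
    rw [Finset.sum_range_succ a, Finset.sum_range_succ (fun i => (a i)^2),
      Finset.sum_range_succ (fun i => ∑ j ∈ Finset.Ioo i (k+1), a i * a j),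
      hlast, Finset.sum_congr rfl hI, Finset.sum_add_distrib, ← Finset.sum_mul]
    linear_combination ih

/-- Equality case of Chen's algebraic lemma: with `n > k ≥ 2` and
`(∑ aᵢ)² = (n - k + 1)(∑ aᵢ² + a)`, the equality `2 ∑_{1 ≤ i < j ≤ k} aᵢ aⱼ = a` holds
iff `a₁ + ⋯ + a_k = a_{k+1} = ⋯ = a_n`.  (Indices are 0-based.) -/
theorem chen_lemma_equality (n k : ℕ) (hk : 2 ≤ k) (hn : k < n)
    (a : ℕ → ℝ) (A : ℝ)
    (h : (∑ i ∈ Finset.range n, a i) ^ 2 =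
        ((n : ℝ) - (k : ℝ) + 1) * (∑ i ∈ Finset.range n, (a i) ^ 2 + A)) :
    2 * ∑ i ∈ Finset.range k, ∑ j ∈ Finset.Ioo i k, a i * a j = A ↔
      ∀ j, k ≤ j → j < n → a j = ∑ i ∈ Finset.range k, a i := by
  set s := ∑ i ∈ Finset.range k, a i with hs
  set Qk := ∑ i ∈ Finset.range k, (a i)^2 with hQk
  set P := ∑ j ∈ Finset.Ico k n, a j with hP
  set R := ∑ j ∈ Finset.Ico k n, (a j)^2 with hR
  have hid := aux_sq_sum_range k a
  have hSsplit : ∑ i ∈ Finset.range n, a i = s + P := by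
    rw [Finset.range_eq_Ico, ← Finset.sum_Ico_consecutive _ (Nat.zero_le k) hn.le,
      ← Finset.range_eq_Ico]
  have hQsplit : ∑ i ∈ Finset.range n, (a i)^2 = Qk + R := by
    rw [Finset.range_eq_Ico, ← Finset.sum_Ico_consecutive _ (Nat.zero_le k) hn.le,
      ← Finset.range_eq_Ico]
  rw [hSsplit, hQsplit] at h
  have hcast : ((n - k : ℕ) : ℝ) = (n : ℝ) - (k : ℝ) := by
    push_cast [Nat.cast_sub hn.le]; ring
  constructor
  · intro h2
    have hA : A = s^2 - Qk := by linarith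
    -- the auxiliary vector: index n ↦ s, indices in Ico k n ↦ a j
    set b : ℕ → ℝ := fun j => if j = n then s else a j with hb
    set t : Finset ℕ := insert n (Finset.Ico k n) with ht
    have hnmem : n ∉ Finset.Ico k n := by simp
    have hcard : (t.card : ℝ) = (n : ℝ) - (k : ℝ) + 1 := by
      rw [ht, Finset.card_insert_of_notMem hnmem, Nat.card_Ico]
      push_cast [Nat.cast_sub hn.le]; ring
    have hbsum : ∑ j ∈ t, b j = s + P := by
      rw [ht, Finset.sum_insert hnmem]
      congr 1
      · simp [hb]
      · apply Finset.sum_congr rfl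
        intro j hj
        rw [Finset.mem_Ico] at hj
        simp [hb, Nat.ne_of_lt hj.2]
    have hbsq : ∑ j ∈ t, (b j)^2 = s^2 + R := by
      rw [ht, Finset.sum_insert hnmem]
      congr 1
      · simp [hb]
      · apply Finset.sum_congr rfl
        intro j hj
        rw [Finset.mem_Ico] at hj
        simp [hb, Nat.ne_of_lt hj.2]
    have hzero : ∑ i ∈ t, ∑ j ∈ t, (b i - b j)^2 = 0 := by
      rw [aux_sum_sub_sq, hcard, hbsum, hbsq]
      linear_combination (-2*((n:ℝ) - (k:ℝ) + 1))*hA - 2*h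
    have hnonneg : ∀ i ∈ t, 0 ≤ ∑ j ∈ t, (b i - b j)^2 :=
      fun i _ => Finset.sum_nonneg fun j _ => sq_nonneg _
    have h3 := (Finset.sum_eq_zero_iff_of_nonneg hnonneg).mp hzero n (Finset.mem_insert_self _ _)
    intro j hkj hjn
    have hj : j ∈ t := Finset.mem_insert_of_mem (Finset.mem_Ico.mpr ⟨hkj, hjn⟩)
    have h4 := (Finset.sum_eq_zero_iff_of_nonneg (fun j _ => sq_nonneg _)).mp h3 j hj
    have h5 : b n - b j = 0 := by
      exact pow_eq_zero_iff (by norm_num) |>.mp h4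
    have hbn : b n = s := by simp [hb]
    have hbj : b j = a j := by simp [hb, Nat.ne_of_lt hjn]
    rw [hbn, hbj, sub_eq_zero] at h5
    exact h5.symm
  · intro hc
    have hPval : P = ((n : ℝ) - (k : ℝ)) * s := by
      have h1 : P = ∑ _j ∈ Finset.Ico k n, s :=
        Finset.sum_congr rfl (fun j hj => by
          rw [Finset.mem_Ico] at hj; exact hc j hj.1 hj.2)
      rw [h1, Finset.sum_const, Nat.card_Ico, nsmul_eq_mul, hcast]
    have hRval : R = ((n : ℝ) - (k : ℝ)) * s^2 := by
      have h1 : R = ∑ _j ∈ Finset.Ico k n, s^2 :=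
        Finset.sum_congr rfl (fun j hj => by
          rw [Finset.mem_Ico] at hj; rw [hc j hj.1 hj.2])
      rw [h1, Finset.sum_const, Nat.card_Ico, nsmul_eq_mul, hcast]
    rw [hPval, hRval] at h
    have hM : (0:ℝ) < (n : ℝ) - (k : ℝ) + 1 := by
      have : (k:ℝ) < (n:ℝ) := by exact_mod_cast hn
      linarith
    have key : s^2 = Qk + A := by
      have h' : ((n:ℝ) - (k:ℝ) + 1) * (((n:ℝ) - (k:ℝ) + 1) * s^2)
          = ((n:ℝ) - (k:ℝ) + 1) * (Qk + ((n:ℝ) - (k:ℝ)) * s^2 + A) := by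
        linear_combination h
      have h'' := mul_left_cancel₀ hM.ne' h'
      linarith
    linarith
end

section
/- Let n ≥ 2 be an integer, r > 0 a real number, and (b_{ij})_{1 ≤ i,j ≤ n} a symmetric array of real numbers (b_{ij} = b_{ji}). Then (∑_{i=1}^n b_{ii})^2 ≤ ((n + r)/n) ∑_{i,j=1}^n b_{ij}^2 + ((n + r)(n^2 − n − r)/(r n)) ∑_{i,j=1}^{n−1} b_{ij}^2. -/
/-- Key quadratic inequality underlying the generalized normalized δ-Casorati
curvature inequality: for a symmetric `n × n` array `b` and `r > 0`,
`(∑ bᵢᵢ)² ≤ ((n+r)/n) ∑_{i,j=1}^n bᵢⱼ² + ((n+r)(n²-n-r)/(rn)) ∑_{i,j=1}^{n-1} bᵢⱼ²`.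
(Indices are 0-based: entries `b i j` with `i, j < n`.) -/
theorem casorati_key_inequality (n : ℕ) (hn : 2 ≤ n) (r : ℝ) (hr : 0 < r)
    (b : ℕ → ℕ → ℝ) (hsymm : ∀ i j, b i j = b j i) :
    (∑ i ∈ Finset.range n, b i i) ^ 2 ≤
      (((n : ℝ) + r) / n) * ∑ i ∈ Finset.range n, ∑ j ∈ Finset.range n, (b i j) ^ 2 +
        (((n : ℝ) + r) * ((n : ℝ) ^ 2 - n - r) / (r * n)) *
          ∑ i ∈ Finset.range (n - 1), ∑ j ∈ Finset.range (n - 1), (b i j) ^ 2 := by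
  obtain ⟨k, rfl⟩ : ∃ k, n = k + 1 := ⟨n - 1, by omega⟩
  have hk : 1 ≤ k := by omega
  set m : ℝ := ((k + 1 : ℕ) : ℝ) with hm
  have hm2 : (2 : ℝ) ≤ m := by rw [hm]; exact_mod_cast hn
  have hmpos : (0 : ℝ) < m := by linarith
  simp only [Nat.add_sub_cancel]
  set Qn := ∑ i ∈ Finset.range (k+1), ∑ j ∈ Finset.range (k+1), (b i j) ^ 2 with hQn
  set Qm := ∑ i ∈ Finset.range k, ∑ j ∈ Finset.range k, (b i j) ^ 2 with hQm
  set D := ∑ i ∈ Finset.range k, (b i i) ^ 2 with hD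
  set s := ∑ i ∈ Finset.range k, b i i with hs
  set t := b k k with ht
  have hS : ∑ i ∈ Finset.range (k+1), b i i = s + t := Finset.sum_range_succ _ _
  have hDnn : 0 ≤ D := Finset.sum_nonneg fun i _ => sq_nonneg _
  have h3 : D ≤ Qm := by
    apply Finset.sum_le_sum
    intro i hi
    exact Finset.single_le_sum (fun j _ => sq_nonneg (b i j)) hi
  have h2 : Qm + t ^ 2 ≤ Qn := by
    rw [hQn, Finset.sum_range_succ]
    have hrow : t ^ 2 ≤ ∑ j ∈ Finset.range (k+1), (b k j) ^ 2 :=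
      Finset.single_le_sum (f := fun j => (b k j) ^ 2) (fun j _ => sq_nonneg _)
        (Finset.self_mem_range_succ k)
    have hblk : Qm ≤ ∑ i ∈ Finset.range k, ∑ j ∈ Finset.range (k+1), (b i j) ^ 2 := by
      apply Finset.sum_le_sum
      intro i hi
      rw [Finset.sum_range_succ]
      nlinarith [sq_nonneg (b i k)]
    linarith
  have h4 : s ^ 2 ≤ (m - 1) * D := by
    have := sq_sum_le_card_mul_sum_sq (s := Finset.range k) (f := fun i => b i i)
    simpa [hm, Nat.cast_add, Nat.cast_one, add_sub_cancel_right] using this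
  rw [hS]
  have hrm : (0 : ℝ) < r * m := by positivity
  have hA : (0 : ℝ) < m + r := by linarith
  rw [div_mul_eq_mul_div, div_mul_eq_mul_div]
  have e1 : (m + r) * Qn / m = r * ((m + r) * Qn) / (r * m) := by
    field_simp
  rw [e1, ← add_div, le_div_iff₀ hrm]
  have step1 : r * (m + r) * (Qm + t ^ 2) ≤ r * (m + r) * Qn :=
    mul_le_mul_of_nonneg_left h2 (by positivity)
  have step2 : (m + r) * (m * (m - 1)) * D ≤ (m + r) * (m * (m - 1)) * Qm :=
    mul_le_mul_of_nonneg_left h3 (mul_nonneg hA.le (mul_nonneg hmpos.le (by linarith)))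
  have step3 : (m + r) * m * s ^ 2 ≤ (m + r) * m * ((m - 1) * D) :=
    mul_le_mul_of_nonneg_left h4 (by positivity)
  nlinarith [sq_nonneg (m * s - r * t), step1, step2, step3]
end

section
/- Let n ≥ 2 be an integer, r > 0 a real number, and (b_{ij})_{1 ≤ i,j ≤ n} a symmetric array of real numbers (b_{ij} = b_{ji}). Equality (∑_{i=1}^n b_{ii})^2 = ((n + r)/n) ∑_{i,j=1}^n b_{ij}^2 + ((n + r)(n^2 − n − r)/(r n)) ∑_{i,j=1}^{n−1} b_{ij}^2 holds if and only if b_{ij} = 0 for all i ≠ j, b_{11} = b_{22} = ... = b_{n−1,n−1}, and b_{nn} = (n(n − 1)/r) · b_{11}. -/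
open Finset

lemma sum_split_diag (s : Finset ℕ) (f : ℕ → ℕ → ℝ) :
    ∑ i ∈ s, ∑ j ∈ s, f i j
      = ∑ i ∈ s, f i i + ∑ i ∈ s, ∑ j ∈ s, (if i = j then 0 else f i j) := by
  rw [← Finset.sum_add_distrib]
  refine Finset.sum_congr rfl fun i hi => ?_
  have h1 : ∑ j ∈ s, (if i = j then f i j else 0) = f i i := by
    rw [Finset.sum_ite_eq s i (fun j => f i j)]
    simp [hi]
  calc ∑ j ∈ s, f i j
      = ∑ j ∈ s, ((if i = j then f i j else 0) + (if i = j then 0 else f i j)) := by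
        refine Finset.sum_congr rfl fun j _ => ?_
        by_cases h : i = j <;> simp [h]
    _ = f i i + ∑ j ∈ s, (if i = j then 0 else f i j) := by
        rw [Finset.sum_add_distrib, h1]

lemma lagrange_identity (s : Finset ℕ) (c z : ℕ → ℝ) (hc : ∀ i ∈ s, c i ≠ 0)
    (hsum : ∑ i ∈ s, 1 / c i = 1) :
    ∑ i ∈ s, c i * z i ^ 2 - (∑ i ∈ s, z i) ^ 2
      = (1/2) * ∑ i ∈ s, ∑ j ∈ s, (c i * z i - c j * z j) ^ 2 / (c i * c j) := by
  have inner : ∀ i ∈ s, ∑ j ∈ s, (c i * z i - c j * z j) ^ 2 / (c i * c j)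
      = c i * z i ^ 2 + (∑ j ∈ s, c j * z j ^ 2) * (1 / c i)
        - 2 * z i * (∑ j ∈ s, z j) := by
    intro i hi
    have h1 : ∀ j ∈ s, (c i * z i - c j * z j) ^ 2 / (c i * c j)
        = c i * z i ^ 2 * (1 / c j) + (c j * z j ^ 2) * (1 / c i) - 2 * z i * z j := by
      intro j hj
      have hci := hc i hi; have hcj := hc j hj
      field_simp
      ring
    rw [Finset.sum_congr rfl h1, Finset.sum_sub_distrib, Finset.sum_add_distrib,
      ← Finset.mul_sum, ← Finset.sum_mul, ← Finset.mul_sum, hsum]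
    ring
  rw [Finset.sum_congr rfl inner, Finset.sum_sub_distrib, Finset.sum_add_distrib,
    ← Finset.sum_mul, ← Finset.mul_sum, hsum, ← Finset.mul_sum]
  ring

/-- Equality case of the key quadratic inequality underlying the generalized
normalized δ-Casorati curvature inequality: equality holds iff `bᵢⱼ = 0` for
`i ≠ j`, the first `n - 1` diagonal entries are all equal, and
`bₙₙ = (n(n-1)/r) b₁₁`.  (Indices are 0-based: `b 0 0` is `b₁₁` and
`b (n-1) (n-1)` is `bₙₙ`.) -/
theorem casorati_key_equality (n : ℕ) (hn : 2 ≤ n) (r : ℝ) (hr : 0 < r)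
    (b : ℕ → ℕ → ℝ) (hsymm : ∀ i j, b i j = b j i) :
    (∑ i ∈ Finset.range n, b i i) ^ 2 =
      (((n : ℝ) + r) / n) * ∑ i ∈ Finset.range n, ∑ j ∈ Finset.range n, (b i j) ^ 2 +
        (((n : ℝ) + r) * ((n : ℝ) ^ 2 - n - r) / (r * n)) *
          ∑ i ∈ Finset.range (n - 1), ∑ j ∈ Finset.range (n - 1), (b i j) ^ 2 ↔
      (∀ i j, i < n → j < n → i ≠ j → b i j = 0) ∧
        (∀ i, i < n - 1 → b i i = b 0 0) ∧
        b (n - 1) (n - 1) = ((n : ℝ) * ((n : ℝ) - 1) / r) * b 0 0 := by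
  obtain ⟨m, rfl⟩ : ∃ m, n = m + 1 := ⟨n - 1, by omega⟩
  have hm : 1 ≤ m := by omega
  simp only [Nat.add_sub_cancel]
  push_cast
  have hmR : (1:ℝ) ≤ (m:ℝ) := by exact_mod_cast hm
  have hr0 : r ≠ 0 := ne_of_gt hr
  have hNpos : (0:ℝ) < (m:ℝ) + 1 := by linarith
  have hN0 : ((m:ℝ) + 1) ≠ 0 := ne_of_gt hNpos
  set α : ℝ := ((m:ℝ) + 1 + r) * m / r with hα
  set β : ℝ := ((m:ℝ) + 1 + r) / ((m:ℝ) + 1) with hβ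
  have hαpos : 0 < α := by
    apply div_pos (mul_pos (by linarith) (by linarith)) hr
  have hβpos : 0 < β := div_pos (by linarith) hNpos
  set c : ℕ → ℝ := fun i => if i = m then β else α with hc
  have hcpos : ∀ i, 0 < c i := by
    intro i; by_cases h : i = m <;> simp [hc, h, hαpos, hβpos]
  have hcne : ∀ i ∈ Finset.range (m+1), c i ≠ 0 := fun i _ => ne_of_gt (hcpos i)
  have hsum1 : ∑ i ∈ Finset.range (m+1), 1 / c i = 1 := by
    rw [Finset.sum_range_succ]
    have h1 : ∀ i ∈ Finset.range m, 1 / c i = 1 / α := by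
      intro i hi
      have : i ≠ m := by simp at hi; omega
      simp [hc, this]
    rw [Finset.sum_congr rfl h1, Finset.sum_const, Finset.card_range]
    simp only [hc, if_pos rfl, nsmul_eq_mul]
    rw [hα, hβ]
    have : (m:ℝ) ≠ 0 := by linarith
    field_simp
    ring
  -- abbreviations
  set z : ℕ → ℝ := fun i => b i i with hz
  set S1 : ℝ := ∑ i ∈ Finset.range m, (b i m) ^ 2 with hS1
  set Q : ℝ := ∑ i ∈ Finset.range m, ∑ j ∈ Finset.range m, (if i = j then 0 else (b i j) ^ 2) with hQ
  set R : ℝ := ∑ i ∈ Finset.range (m+1), ∑ j ∈ Finset.range (m+1),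
      (c i * z i - c j * z j) ^ 2 / (c i * c j) with hR
  set S2 : ℝ := ∑ i ∈ Finset.range (m+1), ∑ j ∈ Finset.range (m+1), (b i j) ^ 2 with hS2
  set S2' : ℝ := ∑ i ∈ Finset.range m, ∑ j ∈ Finset.range m, (b i j) ^ 2 with hS2'
  set T : ℝ := ∑ i ∈ Finset.range (m+1), b i i with hT
  -- structural identities
  have eS2 : S2 = S2' + 2 * S1 + (b m m) ^ 2 := by
    rw [hS2, Finset.sum_range_succ]
    have h1 : ∀ i ∈ Finset.range m, ∑ j ∈ Finset.range (m+1), (b i j)^2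
        = (∑ j ∈ Finset.range m, (b i j)^2) + (b i m)^2 := by
      intro i _; rw [Finset.sum_range_succ]
    rw [Finset.sum_congr rfl h1, Finset.sum_add_distrib, Finset.sum_range_succ]
    have h2 : ∑ j ∈ Finset.range m, (b m j)^2 = S1 := by
      rw [hS1]; exact Finset.sum_congr rfl fun j _ => by rw [hsymm m j]
    rw [h2, ← hS1, ← hS2']
    ring
  have eS2' : S2' = (∑ i ∈ Finset.range m, (z i)^2) + Q := by
    rw [hS2', hQ, sum_split_diag]
  have eCsum : ∑ i ∈ Finset.range (m+1), c i * z i ^ 2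
      = α * (∑ i ∈ Finset.range m, (z i)^2) + β * (z m)^2 := by
    rw [Finset.sum_range_succ]
    have h1 : ∀ i ∈ Finset.range m, c i * z i ^ 2 = α * z i ^ 2 := by
      intro i hi
      have : i ≠ m := by simp at hi; omega
      simp [hc, this]
    rw [Finset.sum_congr rfl h1, ← Finset.mul_sum]
    simp [hc]
  have hlag := lagrange_identity (Finset.range (m+1)) c z hcne hsum1
  rw [eCsum, ← hR, ← hT] at hlag
  have hβC : β + ((m:ℝ) + 1 + r) * (((m:ℝ)+1) ^ 2 - ((m:ℝ)+1) - r) / (r * ((m:ℝ)+1)) = α := by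
    rw [hα, hβ]; field_simp; ring
  -- the key identity
  have key : β * S2
      + (((m:ℝ) + 1 + r) * (((m:ℝ)+1) ^ 2 - ((m:ℝ)+1) - r) / (r * ((m:ℝ)+1))) * S2'
      - T ^ 2 = 2 * β * S1 + α * Q + (1/2) * R := by
    have hzm : (b m m) ^ 2 = (z m) ^ 2 := by rw [hz]
    linear_combination β * eS2 + (β + (((m:ℝ) + 1 + r) * (((m:ℝ)+1) ^ 2 - ((m:ℝ)+1) - r) / (r * ((m:ℝ)+1)))) * eS2' + hlag + (Q + (∑ i ∈ Finset.range m, (z i)^2)) * hβC + β * hzm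
  constructor
  · -- forward direction
    intro heq
    have hzero : 2 * β * S1 + α * Q + (1/2) * R = 0 := by
      linear_combination -key - heq
    have hS1n : 0 ≤ S1 := Finset.sum_nonneg fun i _ => sq_nonneg _
    have hQn : 0 ≤ Q := Finset.sum_nonneg fun i _ => Finset.sum_nonneg fun j _ => by
      split_ifs
      exacts [le_rfl, sq_nonneg _]
    have hRtermn : ∀ i j : ℕ, 0 ≤ (c i * z i - c j * z j) ^ 2 / (c i * c j) :=
      fun i j => div_nonneg (sq_nonneg _) (mul_pos (hcpos i) (hcpos j)).le
    have hRn : 0 ≤ R := Finset.sum_nonneg fun i _ => Finset.sum_nonneg fun j _ => hRtermn i j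
    have hA : 0 ≤ 2 * β * S1 := mul_nonneg (by positivity) hS1n
    have hB : 0 ≤ α * Q := mul_nonneg hαpos.le hQn
    have hC : 0 ≤ (1/2) * R := mul_nonneg (by norm_num) hRn
    have e1 : 2 * β * S1 = 0 := le_antisymm (by linarith) hA
    have e2 : α * Q = 0 := le_antisymm (by linarith) hB
    have e3 : (1/2) * R = 0 := le_antisymm (by linarith) hC
    have hS1z : S1 = 0 := by
      rcases mul_eq_zero.mp e1 with h | h
      · exfalso; linarith
      · exact h
    have hQz : Q = 0 := by
      rcases mul_eq_zero.mp e2 with h | h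
      · exfalso; linarith
      · exact h
    have hRz : R = 0 := by
      rcases mul_eq_zero.mp e3 with h | h
      · exfalso; norm_num at h
      · exact h
    have hbS1 : ∀ i ∈ Finset.range m, b i m = 0 := by
      intro i hi
      have := (Finset.sum_eq_zero_iff_of_nonneg (fun i _ => sq_nonneg (b i m))).mp hS1z i hi
      exact sq_eq_zero_iff.mp this
    have hbQ : ∀ i ∈ Finset.range m, ∀ j ∈ Finset.range m,
        (if i = j then (0:ℝ) else b i j ^ 2) = 0 := by
      intro i hi
      have h1 := (Finset.sum_eq_zero_iff_of_nonneg (fun i _ =>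
        Finset.sum_nonneg fun j _ => by split_ifs; exacts [le_rfl, sq_nonneg _])).mp hQz i hi
      exact fun j hj => (Finset.sum_eq_zero_iff_of_nonneg (fun j _ => by
        split_ifs; exacts [le_rfl, sq_nonneg _])).mp h1 j hj
    have hbR : ∀ i ∈ Finset.range (m+1), ∀ j ∈ Finset.range (m+1),
        c i * z i = c j * z j := by
      intro i hi j hj
      have h1 := (Finset.sum_eq_zero_iff_of_nonneg (fun i _ =>
        Finset.sum_nonneg fun j _ => hRtermn i j)).mp hRz i hi
      have h2 := (Finset.sum_eq_zero_iff_of_nonneg (fun j _ => hRtermn i j)).mp h1 j hj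
      have h3 : (c i * z i - c j * z j) ^ 2 = 0 := by
        rcases div_eq_zero_iff.mp h2 with h | h
        · exact h
        · exact absurd h (mul_pos (hcpos i) (hcpos j)).ne'
      have h4 := sq_eq_zero_iff.mp h3
      linarith [h4]
    refine ⟨?_, ?_, ?_⟩
    · intro i j hi hj hij
      by_cases hie : i = m
      · have hjm : j < m := by omega
        rw [hie, hsymm]
        exact hbS1 j (Finset.mem_range.mpr hjm)
      · by_cases hje : j = m
        · rw [hje]
          exact hbS1 i (Finset.mem_range.mpr (by omega))
        · have h := hbQ i (Finset.mem_range.mpr (by omega)) j (Finset.mem_range.mpr (by omega))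
          rw [if_neg hij] at h
          exact sq_eq_zero_iff.mp h
    · intro i hi
      have h := hbR i (Finset.mem_range.mpr (by omega)) 0 (Finset.mem_range.mpr (by omega))
      have hi' : i ≠ m := by omega
      have h0 : (0:ℕ) ≠ m := by omega
      simp only [hc, if_neg hi', if_neg h0, hz] at h
      exact mul_left_cancel₀ hαpos.ne' h
    · have h := hbR m (Finset.mem_range.mpr (by omega)) 0 (Finset.mem_range.mpr (by omega))
      have h0 : (0:ℕ) ≠ m := by omega
      simp only [hc, if_pos rfl, if_neg h0, hz] at h
      have hmne : (m:ℝ) ≠ 0 := by linarith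
      have hnr : ((m:ℝ) + 1 + r) ≠ 0 := by linarith
      apply mul_left_cancel₀ hβpos.ne'
      rw [h, hα, hβ]
      field_simp
      ring
  · -- backward direction
    rintro ⟨h1, h2, h3⟩
    have hS1z : S1 = 0 := Finset.sum_eq_zero fun i hi => by
      rw [h1 i m (by simp at hi; omega) (by omega) (by simp at hi; omega)]
      simp
    have hQz : Q = 0 := Finset.sum_eq_zero fun i hi => Finset.sum_eq_zero fun j hj => by
      by_cases h : i = j
      · simp [h]
      · rw [if_neg h, h1 i j (by simp at hi; omega) (by simp at hj; omega) h]
        simp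
    have hcz : ∀ i ∈ Finset.range (m+1), c i * z i = α * b 0 0 := by
      intro i hi
      by_cases hie : i = m
      · rw [hie]
        simp only [hc, if_pos rfl, hz]
        rw [h3, hα, hβ]
        have hmne : (m:ℝ) ≠ 0 := by linarith
        field_simp
        ring
      · have him : i < m := by simp at hi; omega
        simp only [hc, if_neg hie, hz]
        rw [h2 i him]
    have hRz : R = 0 := Finset.sum_eq_zero fun i hi => Finset.sum_eq_zero fun j hj => by
      rw [hcz i hi, hcz j hj]
      simp
    linear_combination -key - 2 * β * hS1z - α * hQz - (1/2) * hRz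
end

section
/- Let n ≥ 2 be an integer and r > 0 a real number. Define the n×n real symmetric matrix H_1 by (H_1)_{ii} = 2(n−1)(n+r)/r − 2 for 1 ≤ i ≤ n−1, (H_1)_{nn} = 2r/n, and (H_1)_{ij} = −2 for all i ≠ j. Then H_1 is positive semidefinite. -/
/-- The Hessian block `H₁` (equation (87)) is positive semidefinite:
`(H₁)ᵢᵢ = 2(n-1)(n+r)/r - 2` for `i ≤ n-1`, `(H₁)ₙₙ = 2r/n`, and
`(H₁)ᵢⱼ = -2` off the diagonal.  (Indices are 0-based: the last index is `n-1`.) -/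
theorem H1_posSemidef (n : ℕ) (hn : 2 ≤ n) (r : ℝ) (hr : 0 < r) :
    Matrix.PosSemidef (Matrix.of fun i j : Fin n =>
      if i = j then
        (if (i : ℕ) < n - 1 then 2 * ((n : ℝ) - 1) * ((n : ℝ) + r) / r - 2
         else 2 * r / n)
      else (-2 : ℝ)) := by
  obtain ⟨m, rfl⟩ : ∃ m, n = m + 2 := ⟨n - 2, by omega⟩
  set a : ℝ := 2 * ((m : ℝ) + 1) * (((m : ℝ) + 2) + r) / r with ha
  set b : ℝ := 2 * r / ((m : ℝ) + 2) + 2 with hb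
  have hm2 : (0:ℝ) < (m:ℝ) + 2 := by positivity
  have ha0 : 0 < a := by positivity
  have hb0 : 0 < b := by positivity
  set c : Fin (m + 2) → ℝ := fun i => if (i : ℕ) < m + 1 then a else b with hc
  have hc0 : ∀ i, 0 < c i := by
    intro i; simp only [hc]; split <;> assumption
  have hM : ∀ i j : Fin (m+2),
      (Matrix.of fun i j : Fin (m+2) =>
        if i = j then
          (if (i : ℕ) < (m+2) - 1 then 2 * (((m+2:ℕ) : ℝ) - 1) * (((m+2:ℕ) : ℝ) + r) / r - 2
           else 2 * r / ((m+2:ℕ):ℝ))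
        else (-2 : ℝ)) i j = (if i = j then c i else 0) - 2 := by
    intro i j
    by_cases h : i = j
    · subst h
      simp only [Matrix.of_apply, if_pos rfl, hc]
      by_cases h2 : (i : ℕ) < m + 1
      · rw [if_pos (by omega : (i:ℕ) < (m+2)-1), if_pos h2]
        push_cast; ring
      · rw [if_neg (by omega : ¬ (i:ℕ) < (m+2)-1), if_neg h2]
        push_cast [hb]; ring
    · simp [Matrix.of_apply, h]
  rw [Matrix.posSemidef_iff_dotProduct_mulVec]
  constructor
  · show _ = _
    ext i j
    simp only [Matrix.conjTranspose_apply, star_trivial]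
    rw [hM, hM]
    by_cases h : i = j
    · subst h; rfl
    · rw [if_neg h, if_neg (Ne.symm h)]
  · intro x
    have hQ : dotProduct (star x) ((Matrix.of fun i j : Fin (m+2) =>
        if i = j then
          (if (i : ℕ) < (m+2) - 1 then 2 * (((m+2:ℕ) : ℝ) - 1) * (((m+2:ℕ) : ℝ) + r) / r - 2
           else 2 * r / ((m+2:ℕ):ℝ))
        else (-2 : ℝ)).mulVec x)
        = (∑ i, c i * x i ^ 2) - 2 * (∑ i, x i) ^ 2 := by
      simp only [dotProduct, Matrix.mulVec, star_trivial]
      have : ∀ i : Fin (m+2),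
          (∑ j, (Matrix.of fun i j : Fin (m+2) =>
            if i = j then
              (if (i : ℕ) < (m+2) - 1 then 2 * (((m+2:ℕ) : ℝ) - 1) * (((m+2:ℕ) : ℝ) + r) / r - 2
               else 2 * r / ((m+2:ℕ):ℝ))
            else (-2 : ℝ)) i j * x j)
          = c i * x i - 2 * ∑ j, x j := by
        intro i
        have : ∀ j, (Matrix.of fun i j : Fin (m+2) =>
            if i = j then
              (if (i : ℕ) < (m+2) - 1 then 2 * (((m+2:ℕ) : ℝ) - 1) * (((m+2:ℕ) : ℝ) + r) / r - 2
               else 2 * r / ((m+2:ℕ):ℝ))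
            else (-2 : ℝ)) i j * x j = (if j = i then c i * x j else 0) + (-2) * x j := by
          intro j
          rw [hM]
          by_cases h : i = j
          · subst h; simp; ring
          · rw [if_neg h, if_neg (Ne.symm h)]; ring
        rw [Finset.sum_congr rfl fun j _ => this j, Finset.sum_add_distrib,
          Finset.sum_ite_eq' Finset.univ i (fun j => c i * x j), if_pos (Finset.mem_univ i),
          ← Finset.mul_sum]
        ring
      rw [Finset.sum_congr rfl fun i _ => by rw [this i]]
      rw [Finset.sum_congr rfl fun i _ => (by ring :
        x i * (c i * x i - 2 * ∑ j, x j) = c i * x i ^ 2 - (2 * ∑ j, x j) * x i),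
        Finset.sum_sub_distrib, ← Finset.mul_sum]
      ring
    rw [hQ]
    -- Cauchy-Schwarz
    have key : (∑ i, x i) ^ 2 ≤ ∑ i, c i / 2 * x i ^ 2 := by
      have cs := Finset.sum_mul_sq_le_sq_mul_sq Finset.univ
        (fun i => Real.sqrt (2 / c i)) (fun i => Real.sqrt (c i / 2) * x i)
      have h1 : ∀ i : Fin (m+2), Real.sqrt (2 / c i) * (Real.sqrt (c i / 2) * x i) = x i := by
        intro i
        rw [← mul_assoc, ← Real.sqrt_mul (by positivity)]
        have : 2 / c i * (c i / 2) = 1 := by field_simp [(hc0 i).ne']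
        rw [this, Real.sqrt_one, one_mul]
      have h2 : ∀ i : Fin (m+2), Real.sqrt (2 / c i) ^ 2 = 2 / c i := by
        intro i; exact Real.sq_sqrt (by positivity)
      have h3 : ∀ i : Fin (m+2), (Real.sqrt (c i / 2) * x i) ^ 2 = c i / 2 * x i ^ 2 := by
        intro i; rw [mul_pow, Real.sq_sqrt (by positivity)]
      have hsum : (∑ i : Fin (m+2), 2 / c i) = 1 := by
        rw [Fin.sum_univ_castSucc]
        have hlast : c (Fin.last (m+1)) = b := by
          simp only [hc, Fin.val_last]; rw [if_neg (by omega)]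
        have hcast : ∀ i : Fin (m+1), c i.castSucc = a := by
          intro i; simp only [hc, Fin.coe_castSucc]; rw [if_pos (by omega)]
        rw [hlast, Finset.sum_congr rfl fun i _ => by rw [hcast i]]
        rw [Finset.sum_const, Finset.card_univ, Fintype.card_fin, nsmul_eq_mul]
        rw [ha, hb]
        field_simp
        push_cast
        ring
      simp only [h1, h2, h3] at cs
      rw [hsum, one_mul] at cs
      exact cs
    have h2 : 2 * (∑ i, x i) ^ 2 ≤ ∑ i, c i * x i ^ 2 := by
      have := mul_le_mul_of_nonneg_left key (by norm_num : (0:ℝ) ≤ 2)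
      calc 2 * (∑ i, x i) ^ 2 ≤ 2 * ∑ i, c i / 2 * x i ^ 2 := this
        _ = ∑ i, c i * x i ^ 2 := by rw [Finset.mul_sum]; exact Finset.sum_congr rfl fun i _ => by ring
    linarith
end
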